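/- arXiv:1611.01456 — 2 statements merged into one kernel-verified Lean document; each statement's English description precedes it below -/
import Mathlib

section
/- Let L be a real symmetric N×N matrix with spectral decomposition L = χΛχᵀ where χ is orthogonal and Λ diagonal. Let A be any real N×N matrix. Then the gradient of the map L ↦ tr(A e^L) is given by ∇_L tr(A e^L) = χ((χᵀAᵀχ) ∘ B)χᵀ, where ∘ denotes the Hadamard (entrywise) product and B is the N×N matrix with entries B_ij = e^{Λ_ii} if Λ_ii = Λ_jj and B_ij = (e^{Λ_ii} − e^{Λ_jj})/(Λ_ii − Λ_jj) otherwise. -/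
open Matrix

attribute [local instance] Matrix.linftyOpNormedRing Matrix.linftyOpNormedAlgebra

open Finset Nat

section Aux

lemma hasSum_exp_div (x : ℝ) : HasSum (fun n : ℕ => x ^ n / n !) (Real.exp x) := by
  have h := NormedSpace.expSeries_div_summable x
  have h2 := h.hasSum
  have h3 : Real.exp x = ∑' (n : ℕ), x ^ n / n ! := by
    rw [Real.exp_eq_exp_ℝ, NormedSpace.exp_eq_tsum_div]
  rwa [← h3] at h2

lemma scalar_sum (x y : ℝ) :
    ∑' (n : ℕ), (n ! : ℝ)⁻¹ * ∑ k ∈ Finset.range n, x ^ (n - 1 - k) * y ^ k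
      = if x = y then Real.exp x else (Real.exp x - Real.exp y) / (x - y) := by
  have hrefl : ∀ n : ℕ, ∑ k ∈ range n, x ^ (n - 1 - k) * y ^ k
      = ∑ i ∈ range n, x ^ i * y ^ (n - 1 - i) := by
    intro n
    rw [← Finset.sum_range_reflect]
    refine Finset.sum_congr rfl fun k hk => ?_
    have hk' := Finset.mem_range.mp hk
    have e1 : n - 1 - (n - 1 - k) = k := by omega
    rw [e1]
  by_cases hxy : x = y
  · subst hxy
    simp only [if_pos rfl]
    have hterm : ∀ n : ℕ, (n ! : ℝ)⁻¹ * ∑ k ∈ range n, x ^ (n - 1 - k) * x ^ k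
        = (n ! : ℝ)⁻¹ * (n * x ^ (n - 1)) := by
      intro n
      congr 1
      rw [Finset.sum_congr rfl (fun k hk => ?_), Finset.sum_const, card_range, nsmul_eq_mul]
      have hk' := Finset.mem_range.mp hk
      rw [← pow_add]
      congr 1; omega
    simp only [hterm]
    set f : ℕ → ℝ := fun n => (n ! : ℝ)⁻¹ * (n * x ^ (n - 1)) with hfdef
    have hshift : HasSum (fun n : ℕ => f (n + 1)) (Real.exp x) := by
      simp only [hfdef]
      refine (hasSum_exp_div x).congr_fun fun n => ?_
      have : ((n + 1)! : ℝ) = (n + 1) * n ! := by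
        rw [Nat.factorial_succ]; push_cast; ring
      rw [this]
      have h1 : (n ! : ℝ) ≠ 0 := Nat.cast_ne_zero.mpr n.factorial_ne_zero
      have h2 : ((n : ℝ) + 1) ≠ 0 := by positivity
      field_simp
      rw [Nat.add_sub_cancel]; push_cast; ring
    have hfin : HasSum f (Real.exp x + ∑ i ∈ range 1, f i) := (hasSum_nat_add_iff 1).mp hshift
    simp only [range_one, sum_singleton, hfdef] at hfin
    norm_num at hfin
    exact hfin.tsum_eq
  · rw [if_neg hxy]
    have hsub : x - y ≠ 0 := sub_ne_zero.mpr hxy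
    have hterm : ∀ n : ℕ, (n ! : ℝ)⁻¹ * ∑ k ∈ range n, x ^ (n - 1 - k) * y ^ k
        = x ^ n / n ! / (x - y) - y ^ n / n ! / (x - y) := by
      intro n
      rw [hrefl n]
      have := geom_sum₂_mul x y n
      have hs : ∑ i ∈ range n, x ^ i * y ^ (n - 1 - i) = (x ^ n - y ^ n) / (x - y) := by
        field_simp [this]
        exact this
      rw [hs]
      have h1 : (n ! : ℝ) ≠ 0 := Nat.cast_ne_zero.mpr n.factorial_ne_zero
      field_simp
    simp only [hterm]
    rw [sub_div]
    have h1 := (hasSum_exp_div x).div_const (x - y)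
    have h2 := (hasSum_exp_div y).div_const (x - y)
    exact (h1.sub h2).tsum_eq

variable {N : ℕ}

noncomputable instance instNACGMatCLMReal :
    NormedAddCommGroup (Matrix (Fin N) (Fin N) ℝ →L[ℝ] ℝ) :=
  ContinuousLinearMap.toNormedAddCommGroup

noncomputable instance instNSMatCLMReal :
    NormedSpace ℝ (Matrix (Fin N) (Fin N) ℝ →L[ℝ] ℝ) :=
  ContinuousLinearMap.toNormedSpace

instance instCSMatCLMReal :
    @CompleteSpace (Matrix (Fin N) (Fin N) ℝ →L[ℝ] ℝ) PseudoMetricSpace.toUniformSpace :=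
  (ContinuousLinearMap.instCompleteSpace : CompleteSpace (@ContinuousLinearMap ℝ ℝ _ _ (RingHom.id ℝ)
    (Matrix (Fin N) (Fin N) ℝ) PseudoMetricSpace.toUniformSpace.toTopologicalSpace _ ℝ _ _ _ _))

noncomputable instance instNACGMatCLMMat :
    NormedAddCommGroup (Matrix (Fin N) (Fin N) ℝ →L[ℝ] Matrix (Fin N) (Fin N) ℝ) :=
  ContinuousLinearMap.toNormedAddCommGroup

/-- The continuous linear map `X ↦ (A * X).trace`. -/
noncomputable def trL (A : Matrix (Fin N) (Fin N) ℝ) : Matrix (Fin N) (Fin N) ℝ →L[ℝ] ℝ :=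
  LinearMap.toContinuousLinearMap
    ((Matrix.traceLinearMap (Fin N) ℝ ℝ).comp (LinearMap.mulLeft ℝ A))

@[simp] lemma trL_apply (A X : Matrix (Fin N) (Fin N) ℝ) : trL A X = (A * X).trace := rfl

/-- The continuous linear map `X ↦ X i j`. -/
noncomputable def entryCLM (i j : Fin N) : Matrix (Fin N) (Fin N) ℝ →L[ℝ] ℝ :=
  LinearMap.toContinuousLinearMap
    { toFun := fun X : Matrix (Fin N) (Fin N) ℝ => X i j,
      map_add' := fun _ _ => rfl, map_smul' := fun _ _ => rfl }

@[simp] lemma entryCLM_apply (i j : Fin N) (X : Matrix (Fin N) (Fin N) ℝ) :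
    entryCLM i j X = X i j := rfl

/-- Candidate derivative of `X ↦ X ^ n`. -/
noncomputable def powD (M : Matrix (Fin N) (Fin N) ℝ) (n : ℕ) :
    Matrix (Fin N) (Fin N) ℝ →L[ℝ] Matrix (Fin N) (Fin N) ℝ :=
  ∑ k ∈ Finset.range n,
    ContinuousLinearMap.mulLeftRight ℝ (Matrix (Fin N) (Fin N) ℝ) (M ^ k) (M ^ (n - 1 - k))

lemma powD_apply (M : Matrix (Fin N) (Fin N) ℝ) (n : ℕ) (Δ : Matrix (Fin N) (Fin N) ℝ) :
    powD M n Δ = ∑ k ∈ Finset.range n, M ^ k * Δ * M ^ (n - 1 - k) := by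
  simp only [powD]
  erw [ContinuousLinearMap.sum_apply]
  exact Finset.sum_congr rfl fun k _ => ContinuousLinearMap.mulLeftRight_apply _ _ _ _ _

lemma hasFDerivAt_matrix_pow (n : ℕ) (M : Matrix (Fin N) (Fin N) ℝ) :
    HasFDerivAt (fun X : Matrix (Fin N) (Fin N) ℝ => X ^ n) (powD M n) M := by
  induction n with
  | zero =>
    simp only [powD, Finset.range_zero]
    erw [Finset.sum_empty]
    simpa using hasFDerivAt_const (1 : Matrix (Fin N) (Fin N) ℝ) M
  | succ n ih =>
    have h := ih.mul' (hasFDerivAt_id M)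
    simp only [id_eq] at h
    have heq : (fun X : Matrix (Fin N) (Fin N) ℝ => X ^ n) * id
        = fun X : Matrix (Fin N) (Fin N) ℝ => X ^ (n + 1) := by
      funext X; simp [pow_succ]
    rw [← heq]
    refine h.congr_fderiv (Eq.symm ?_)
    apply ContinuousLinearMap.ext
    intro Δ
    rw [powD_apply]
    rw [Finset.sum_range_succ]
    change _ = M ^ n * Δ + powD M n Δ * M
    rw [powD_apply]
    rw [Finset.sum_mul]
    have e1 : ∀ k ∈ Finset.range n, M ^ k * Δ * M ^ (n + 1 - 1 - k)
        = M ^ k * Δ * M ^ (n - 1 - k) * M := by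
      intro k hk
      have hk' := Finset.mem_range.mp hk
      rw [mul_assoc (M ^ k * Δ), ← pow_succ]
      congr 2
      omega
    rw [Finset.sum_congr rfl e1]
    have e2 : M ^ n * Δ * M ^ (n + 1 - 1 - n) = M ^ n * Δ := by
      simp
    rw [e2, add_comm]

set_option synthInstance.maxHeartbeats 1000000 in
lemma matrix_norm_one_le : ‖(1 : Matrix (Fin N) (Fin N) ℝ)‖ ≤ 1 := by
  rcases Nat.eq_zero_or_pos N with h | h
  · subst h
    have : (1 : Matrix (Fin 0) (Fin 0) ℝ) = 0 := by
      ext i; exact i.elim0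
    rw [this, norm_zero]; norm_num
  · haveI : Nonempty (Fin N) := ⟨⟨0, h⟩⟩
    haveI := Matrix.linfty_opNormOneClass (α := ℝ) (n := Fin N)
    rw [norm_one]

lemma matrix_pow_norm_le {R : ℝ} (M : Matrix (Fin N) (Fin N) ℝ) (hM : ‖M‖ ≤ R) (hR : 1 ≤ R) :
    ∀ j, ‖M ^ j‖ ≤ R ^ j := by
  intro j
  induction j with
  | zero => rw [pow_zero, pow_zero]; exact matrix_norm_one_le
  | succ j ih =>
    rw [pow_succ, pow_succ]
    calc ‖M ^ j * M‖ ≤ ‖M ^ j‖ * ‖M‖ := norm_mul_le _ _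
    _ ≤ R ^ j * R := by
        apply mul_le_mul ih hM (norm_nonneg M)
        positivity

lemma powD_norm_le {R : ℝ} (M : Matrix (Fin N) (Fin N) ℝ) (hM : ‖M‖ ≤ R) (hR : 1 ≤ R) (n : ℕ) :
    ‖powD M n‖ ≤ n * R ^ (n - 1) := by
  calc ‖powD M n‖ ≤ ∑ k ∈ Finset.range n,
      ‖ContinuousLinearMap.mulLeftRight ℝ (Matrix (Fin N) (Fin N) ℝ) (M ^ k) (M ^ (n - 1 - k))‖ :=
        norm_sum_le _ _
  _ ≤ ∑ _k ∈ Finset.range n, R ^ (n - 1) := by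
      refine Finset.sum_le_sum fun k hk => ?_
      have hk' := Finset.mem_range.mp hk
      calc ‖ContinuousLinearMap.mulLeftRight ℝ (Matrix (Fin N) (Fin N) ℝ) (M ^ k)
            (M ^ (n - 1 - k))‖ ≤ ‖M ^ k‖ * ‖M ^ (n - 1 - k)‖ :=
            ContinuousLinearMap.opNorm_mulLeftRight_apply_apply_le ℝ _ _ _
      _ ≤ R ^ k * R ^ (n - 1 - k) := by
          apply mul_le_mul (matrix_pow_norm_le M hM hR k) (matrix_pow_norm_le M hM hR _)
            (norm_nonneg _)
          positivity
      _ = R ^ (n - 1) := by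
          rw [← pow_add]
          congr 1
          omega
  _ = n * R ^ (n - 1) := by
      rw [Finset.sum_const, Finset.card_range, nsmul_eq_mul]

lemma summable_aux (R : ℝ) : Summable (fun n : ℕ => (n : ℝ) * R ^ (n - 1) / n !) := by
  rw [← summable_nat_add_iff 1]
  refine (Real.summable_pow_div_factorial R).congr fun n => ?_
  have : ((n + 1)! : ℝ) = (n + 1) * n ! := by
    rw [Nat.factorial_succ]; push_cast; ring
  have h1 : (n ! : ℝ) ≠ 0 := Nat.cast_ne_zero.mpr n.factorial_ne_zero
  have h2 : ((n : ℝ) + 1) ≠ 0 := by positivity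
  simp only [Nat.add_sub_cancel, this]
  push_cast
  field_simp

end Aux

/-- gradient of `L ↦ tr(A e^L)` at a symmetric `L = χ Λ χᵀ`
(`χ` orthogonal, `Λ = diagonal d`) is `χ ((χᵀAᵀχ) ∘ B) χᵀ`, where the gradient `G`
is characterized by `fderiv f L Δ = ⟨G, Δ⟩ = tr(Gᵀ Δ)` (Frobenius inner product). -/
theorem gradient_trace_exp
    (N : ℕ) (A L χ : Matrix (Fin N) (Fin N) ℝ) (d : Fin N → ℝ)
    (hLsymm : L.IsSymm)
    (hχ : χ * χᵀ = 1) (hχ' : χᵀ * χ = 1)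
    (hdecomp : L = χ * Matrix.diagonal d * χᵀ)
    (B : Matrix (Fin N) (Fin N) ℝ)
    (hB : ∀ i j, B i j =
      if d i = d j then Real.exp (d i)
      else (Real.exp (d i) - Real.exp (d j)) / (d i - d j)) :
    DifferentiableAt ℝ (fun M : Matrix (Fin N) (Fin N) ℝ =>
        (A * NormedSpace.exp M).trace) L ∧
    ∀ Δ : Matrix (Fin N) (Fin N) ℝ,
      fderiv ℝ (fun M : Matrix (Fin N) (Fin N) ℝ =>
        (A * NormedSpace.exp M).trace) L Δ =
      ((χ * ((χᵀ * Aᵀ * χ) ⊙ B) * χᵀ)ᵀ * Δ).trace := by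
  classical
  set R : ℝ := ‖L‖ + 1 with hRdef
  have hR1 : (1 : ℝ) ≤ R := le_add_of_nonneg_left (norm_nonneg L)
  set s : Set (Matrix (Fin N) (Fin N) ℝ) := Metric.ball 0 R with hsdef
  have hLs : L ∈ s := by
    rw [hsdef]
    refine mem_ball_zero_iff.mpr ?_
    rw [hRdef]
    linarith
  set f : ℕ → Matrix (Fin N) (Fin N) ℝ → ℝ :=
    fun n M => (n ! : ℝ)⁻¹ • trL A (M ^ n) with hfdef
  set f' : ℕ → Matrix (Fin N) (Fin N) ℝ → (Matrix (Fin N) (Fin N) ℝ →L[ℝ] ℝ) :=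
    fun n M => (n ! : ℝ)⁻¹ • ((trL A).comp (powD M n)) with hf'def
  set u : ℕ → ℝ := fun n => ‖trL A‖ * ((n : ℝ) * R ^ (n - 1) / n !) with hudef
  have hu : Summable u := (summable_aux R).mul_left _
  have hfd : ∀ (n : ℕ) (M : Matrix (Fin N) (Fin N) ℝ), HasFDerivAt (f n) (f' n M) M := by
    intro n M
    exact ((trL A).hasFDerivAt.comp M (hasFDerivAt_matrix_pow n M)).const_smul ((n ! : ℝ)⁻¹)
  have hbound : ∀ (n : ℕ) (M : Matrix (Fin N) (Fin N) ℝ), M ∈ s → ‖f' n M‖ ≤ u n := by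
    intro n M hM
    have hMn : ‖M‖ ≤ R := by
      have : ‖M‖ < R := mem_ball_zero_iff.mp (by rwa [hsdef] at hM)
      linarith
    simp only [hf'def, hudef]
    rw [norm_smul ((n ! : ℝ)⁻¹) ((trL A).comp (powD M n))]
    have h1 : ‖(trL A).comp (powD M n)‖ ≤ ‖trL A‖ * (n * R ^ (n - 1)) := by
      calc ‖(trL A).comp (powD M n)‖ ≤ ‖trL A‖ * ‖powD M n‖ :=
        ContinuousLinearMap.opNorm_comp_le _ _
      _ ≤ ‖trL A‖ * (n * R ^ (n - 1)) := by
          apply mul_le_mul_of_nonneg_left (powD_norm_le M hMn hR1 n) (norm_nonneg _)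
    have h2 : ‖(n ! : ℝ)⁻¹‖ = (n ! : ℝ)⁻¹ := by
      rw [Real.norm_eq_abs, abs_of_nonneg]
      positivity
    rw [h2]
    calc (n ! : ℝ)⁻¹ * ‖(trL A).comp (powD M n)‖
        ≤ (n ! : ℝ)⁻¹ * (‖trL A‖ * (n * R ^ (n - 1))) := by
          apply mul_le_mul_of_nonneg_left h1
          positivity
    _ = ‖trL A‖ * ((n : ℝ) * R ^ (n - 1) / n !) := by
          field_simp
  have hf0 : Summable fun n => f n L := by
    have hs := NormedSpace.expSeries_summable' (𝕂 := ℝ) L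
    refine (hs.mapL (trL A)).congr fun n => ?_
    simp [hfdef, _root_.map_smul]
  have hfun : ∀ M : Matrix (Fin N) (Fin N) ℝ,
      (A * NormedSpace.exp M).trace = ∑' n, f n M := by
    intro M
    have hsM := NormedSpace.expSeries_summable' (𝕂 := ℝ) M
    have h1 : (A * NormedSpace.exp M).trace = trL A (NormedSpace.exp M) := rfl
    rw [h1, NormedSpace.exp_eq_tsum (𝕂 := ℝ), ContinuousLinearMap.map_tsum (trL A) hsM]
    refine tsum_congr fun n => ?_
    simp [hfdef, _root_.map_smul]
  have key : HasFDerivAt (fun M : Matrix (Fin N) (Fin N) ℝ =>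
      (A * NormedSpace.exp M).trace) (∑' n, f' n L) L := by
    have h := hasFDerivAt_tsum_of_isPreconnected hu Metric.isOpen_ball
      (convex_ball (0 : Matrix (Fin N) (Fin N) ℝ) R).isPreconnected
      (fun n x _ => hfd n x) hbound hLs hf0 hLs
    have heq : (fun y : Matrix (Fin N) (Fin N) ℝ => ∑' n, f n y)
        = fun M : Matrix (Fin N) (Fin N) ℝ => (A * NormedSpace.exp M).trace := by
      funext M
      exact (hfun M).symm
    rwa [heq] at h
  refine ⟨key.differentiableAt, fun Δ => ?_⟩
  rw [key.fderiv]
  -- Evaluate the sum of derivatives at Δ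
  have hsumf' : Summable fun n => f' n L :=
    Summable.of_norm_bounded hu fun n => hbound n L hLs
  have happ : (∑' n, f' n L) Δ = ∑' n, f' n L Δ :=
    ContinuousLinearMap.map_tsum (ContinuousLinearMap.apply ℝ ℝ Δ) hsumf'
  rw [happ]
  -- The matrices T n
  set D : Matrix (Fin N) (Fin N) ℝ := Matrix.diagonal d with hDdef
  set T : ℕ → Matrix (Fin N) (Fin N) ℝ :=
    fun n => (n ! : ℝ)⁻¹ • ∑ k ∈ Finset.range n, L ^ (n - 1 - k) * A * L ^ k with hTdef
  have hLnorm : ‖L‖ ≤ R := by simp [hRdef]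
  have hTnorm : ∀ n, ‖T n‖ ≤ ‖A‖ * ((n : ℝ) * R ^ (n - 1) / n !) := by
    intro n
    simp only [hTdef]
    rw [norm_smul]
    have h2 : ‖(n ! : ℝ)⁻¹‖ = (n ! : ℝ)⁻¹ := by
      rw [Real.norm_eq_abs, abs_of_nonneg]; positivity
    rw [h2]
    have h3 : ‖∑ k ∈ Finset.range n, L ^ (n - 1 - k) * A * L ^ k‖
        ≤ n * (‖A‖ * R ^ (n - 1)) := by
      calc ‖∑ k ∈ Finset.range n, L ^ (n - 1 - k) * A * L ^ k‖
          ≤ ∑ k ∈ Finset.range n, ‖L ^ (n - 1 - k) * A * L ^ k‖ := norm_sum_le _ _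
      _ ≤ ∑ _k ∈ Finset.range n, ‖A‖ * R ^ (n - 1) := by
          refine Finset.sum_le_sum fun k hk => ?_
          have hk' := Finset.mem_range.mp hk
          calc ‖L ^ (n - 1 - k) * A * L ^ k‖ ≤ ‖L ^ (n - 1 - k) * A‖ * ‖L ^ k‖ := norm_mul_le _ _
          _ ≤ ‖L ^ (n - 1 - k)‖ * ‖A‖ * ‖L ^ k‖ := by
              apply mul_le_mul_of_nonneg_right (norm_mul_le _ _) (norm_nonneg _)
          _ ≤ R ^ (n - 1 - k) * ‖A‖ * R ^ k := by
              have p1 := matrix_pow_norm_le L hLnorm hR1 (n - 1 - k)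
              have p2 := matrix_pow_norm_le L hLnorm hR1 k
              apply mul_le_mul (mul_le_mul p1 le_rfl (norm_nonneg _) (by positivity)) p2
                (norm_nonneg _) (by positivity)
          _ = ‖A‖ * R ^ (n - 1) := by
              rw [mul_comm (R ^ (n - 1 - k)) ‖A‖, mul_assoc, ← pow_add]
              congr 2
              omega
      _ = n * (‖A‖ * R ^ (n - 1)) := by
          rw [Finset.sum_const, Finset.card_range, nsmul_eq_mul]
    calc (n ! : ℝ)⁻¹ * ‖∑ k ∈ Finset.range n, L ^ (n - 1 - k) * A * L ^ k‖
        ≤ (n ! : ℝ)⁻¹ * (n * (‖A‖ * R ^ (n - 1))) := by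
          apply mul_le_mul_of_nonneg_left h3; positivity
    _ = ‖A‖ * ((n : ℝ) * R ^ (n - 1) / n !) := by
          field_simp
  have hTsum : Summable T :=
    Summable.of_norm_bounded ((summable_aux R).mul_left ‖A‖) hTnorm
  -- f' n L Δ = tr (T n * Δ)
  have hstep1 : ∀ n, f' n L Δ = (T n * Δ).trace := by
    intro n
    simp only [hf'def, hTdef, ContinuousLinearMap.smul_apply, ContinuousLinearMap.comp_apply,
      trL_apply, powD_apply, smul_eq_mul, Matrix.smul_mul, Matrix.trace_smul]
    congr 1
    rw [Finset.mul_sum, Matrix.trace_sum, Matrix.sum_mul, Matrix.trace_sum]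
    refine Finset.sum_congr rfl fun k _ => ?_
    have e1 : A * (L ^ k * Δ * L ^ (n - 1 - k)) = (A * L ^ k * Δ) * L ^ (n - 1 - k) := by
      noncomm_ring
    rw [e1, Matrix.trace_mul_comm]
    have e2 : L ^ (n - 1 - k) * (A * L ^ k * Δ) = (L ^ (n - 1 - k) * A * L ^ k) * Δ := by
      noncomm_ring
    rw [e2]
  simp only [hstep1]
  -- ∑' tr (T n * Δ) = tr ((∑' T) * Δ)
  have hstep3 : ∑' n, (T n * Δ).trace = ((∑' n, T n) * Δ).trace := by
    have h1 : ∀ n, (T n * Δ).trace = trL Δ (T n) := by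
      intro n
      rw [trL_apply, Matrix.trace_mul_comm]
    simp only [h1]
    rw [← ContinuousLinearMap.map_tsum (trL Δ) hTsum, trL_apply, Matrix.trace_mul_comm]
  rw [hstep3]
  -- ∑' T = Gᵀ
  have hLpow : ∀ j : ℕ, L ^ j = χ * D ^ j * χᵀ := by
    intro j
    induction j with
    | zero => simp [hχ]
    | succ j ih =>
      have hcancel : ∀ X : Matrix (Fin N) (Fin N) ℝ, χᵀ * (χ * X) = X := by
        intro X
        rw [← Matrix.mul_assoc, hχ', Matrix.one_mul]
      rw [pow_succ, ih, hdecomp, pow_succ]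
      simp only [Matrix.mul_assoc]
      rw [hcancel]
  set Atil : Matrix (Fin N) (Fin N) ℝ := χᵀ * A * χ with hAtildef
  set U : ℕ → Matrix (Fin N) (Fin N) ℝ :=
    fun n => (n ! : ℝ)⁻¹ • ∑ k ∈ Finset.range n, D ^ (n - 1 - k) * Atil * D ^ k with hUdef
  have hTU : ∀ n, T n = χ * U n * χᵀ := by
    intro n
    simp only [hTdef, hUdef, Matrix.mul_smul, Matrix.smul_mul]
    congr 1
    rw [Finset.mul_sum, Finset.sum_mul]
    refine Finset.sum_congr rfl fun k _ => ?_
    rw [hLpow, hLpow, hAtildef]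
    noncomm_ring
  have hUsum : Summable U := by
    have h := hTsum.mapL (ContinuousLinearMap.mulLeftRight ℝ (Matrix (Fin N) (Fin N) ℝ) χᵀ χ)
    refine h.congr fun n => ?_
    rw [ContinuousLinearMap.mulLeftRight_apply, hTU n]
    rw [Matrix.mul_assoc, Matrix.mul_assoc, hχ', Matrix.mul_one, ← Matrix.mul_assoc, hχ',
      Matrix.one_mul]
  have hsumTU : ∑' n, T n = χ * (∑' n, U n) * χᵀ := by
    have h := ContinuousLinearMap.map_tsum
      (ContinuousLinearMap.mulLeftRight ℝ (Matrix (Fin N) (Fin N) ℝ) χ χᵀ) hUsum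
    rw [ContinuousLinearMap.mulLeftRight_apply] at h
    refine Eq.trans ?_ h.symm
    refine tsum_congr fun n => ?_
    rw [hTU n, ContinuousLinearMap.mulLeftRight_apply]
  have hUval : ∑' n, U n = ((χᵀ * Aᵀ * χ) ⊙ B)ᵀ := by
    have hUentry : ∀ (i j : Fin N), (∑' n, U n) i j = ∑' n, U n i j := by
      intro i j
      have h := ContinuousLinearMap.map_tsum (entryCLM i j) hUsum
      simpa using h
    ext i j
    rw [hUentry i j]
    have hDD : ∀ m k : ℕ, (D ^ m * Atil * D ^ k) i j = d i ^ m * Atil i j * d j ^ k := by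
      intro m k
      rw [hDdef, Matrix.diagonal_pow, Matrix.diagonal_pow, Matrix.mul_diagonal,
        Matrix.diagonal_mul, Pi.pow_apply, Pi.pow_apply]
    have hU : ∀ n, U n i j = Atil i j * ((n ! : ℝ)⁻¹ *
        ∑ k ∈ Finset.range n, (d i) ^ (n - 1 - k) * (d j) ^ k) := by
      intro n
      simp only [hUdef, Matrix.smul_apply, Matrix.sum_apply, smul_eq_mul]
      rw [Finset.sum_congr rfl (fun k _ => hDD (n - 1 - k) k)]
      rw [Finset.mul_sum, Finset.mul_sum]
      rw [Finset.mul_sum]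
      refine Finset.sum_congr rfl fun k _ => ?_
      ring
    simp only [hU]
    rw [tsum_mul_left, scalar_sum (d i) (d j)]
    have htr : (χᵀ * Aᵀ * χ) j i = Atil i j := by
      have h1 : (χᵀ * Aᵀ * χ)ᵀ = Atil := by
        rw [Matrix.transpose_mul, Matrix.transpose_mul, Matrix.transpose_transpose,
          Matrix.transpose_transpose, hAtildef, Matrix.mul_assoc]
      calc (χᵀ * Aᵀ * χ) j i = ((χᵀ * Aᵀ * χ)ᵀ) i j := (Matrix.transpose_apply _ i j).symm
      _ = Atil i j := by rw [h1]
    rw [Matrix.transpose_apply, Matrix.hadamard_apply, htr, hB j i]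
    by_cases hd : d i = d j
    · rw [if_pos hd, if_pos hd.symm, hd, mul_comm]
    · rw [if_neg hd, if_neg (fun h => hd h.symm)]
      have hfrac : (Real.exp (d j) - Real.exp (d i)) / (d j - d i)
          = (Real.exp (d i) - Real.exp (d j)) / (d i - d j) := by
        rw [← neg_sub (Real.exp (d i)), ← neg_sub (d i), neg_div_neg_eq]
      rw [hfrac, mul_comm]
  rw [hsumTU, hUval]
  congr 2
  rw [Matrix.transpose_mul, Matrix.transpose_mul, Matrix.transpose_transpose, Matrix.mul_assoc]
end

section
/- For a diagonal real N×N matrix Λ, the Fréchet derivative of the matrix exponential at Λ applied to a direction Δ equals B ∘ Δ, where B_ij = e^{Λ_ii} if Λ_ii = Λ_jj and B_ij = (e^{Λ_ii} − e^{Λ_jj})/(Λ_ii − Λ_jj) otherwise. -/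
open Matrix

attribute [local instance] Matrix.linftyOpNormedRing Matrix.linftyOpNormedAlgebra

open Finset Nat

set_option linter.unusedSectionVars false

namespace FrechetAux

variable {A : Type*} [NormedRing A] [NormOneClass A] [NormedAlgebra ℝ A] [CompleteSpace A]

/-- first-order term of the expansion of `(X+Y)^n`. -/
noncomputable def Dn (X Y : A) (n : ℕ) : A :=
  ∑ k ∈ Finset.range n, X ^ k * Y * X ^ (n - 1 - k)

lemma Dn_succ (X Y : A) (n : ℕ) :
    Dn X Y (n + 1) = Y * X ^ n + X * Dn X Y n := by
  unfold Dn
  rw [Finset.sum_range_succ', Finset.mul_sum]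
  simp only [pow_zero, one_mul, mul_one, Nat.add_sub_cancel, Nat.sub_zero]
  rw [add_comm]
  congr 1
  apply Finset.sum_congr rfl
  intro k hk
  have h2 : n - (k + 1) = n - 1 - k := by omega
  rw [h2, _root_.pow_succ']
  simp only [mul_assoc]

lemma Rn_succ (X Y : A) (n : ℕ) :
    (X + Y) ^ (n + 1) - X ^ (n + 1) - Dn X Y (n + 1)
      = X * ((X + Y) ^ n - X ^ n - Dn X Y n) + Y * Dn X Y n
        + Y * ((X + Y) ^ n - X ^ n - Dn X Y n) := by
  rw [Dn_succ, _root_.pow_succ' (X + Y), _root_.pow_succ' X]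
  noncomm_ring

lemma Dn_norm (X Y : A) (n : ℕ) :
    ‖Dn X Y n‖ ≤ n * ‖X‖ ^ (n - 1) * ‖Y‖ := by
  calc ‖Dn X Y n‖ ≤ ∑ k ∈ Finset.range n, ‖X ^ k * Y * X ^ (n - 1 - k)‖ :=
        norm_sum_le _ _
    _ ≤ ∑ k ∈ Finset.range n, ‖X‖ ^ (n - 1) * ‖Y‖ := by
        apply Finset.sum_le_sum
        intro k hk
        have hk' := Finset.mem_range.mp hk
        calc ‖X ^ k * Y * X ^ (n - 1 - k)‖ ≤ ‖X ^ k * Y‖ * ‖X ^ (n - 1 - k)‖ := norm_mul_le _ _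
          _ ≤ ‖X ^ k‖ * ‖Y‖ * ‖X ^ (n - 1 - k)‖ :=
              mul_le_mul_of_nonneg_right (norm_mul_le _ _) (norm_nonneg _)
          _ ≤ ‖X‖ ^ k * ‖Y‖ * ‖X‖ ^ (n - 1 - k) := by
              have h1 : ‖X ^ k‖ ≤ ‖X‖ ^ k := norm_pow_le _ _
              have h2 : ‖X ^ (n - 1 - k)‖ ≤ ‖X‖ ^ (n - 1 - k) := norm_pow_le _ _
              exact mul_le_mul (mul_le_mul_of_nonneg_right h1 (norm_nonneg _)) h2
                (norm_nonneg _) (by positivity)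
          _ = ‖X‖ ^ (n - 1) * ‖Y‖ := by
              rw [mul_comm (‖X‖ ^ k) ‖Y‖, mul_assoc, ← pow_add, mul_comm ‖Y‖ _]
              congr 2
              omega
    _ = n * ‖X‖ ^ (n - 1) * ‖Y‖ := by
        rw [Finset.sum_const, Finset.card_range, nsmul_eq_mul]; ring

/-- scalar majorant -/
noncomputable def rho (x y : ℝ) (n : ℕ) : ℝ := (x + y) ^ n - x ^ n - n * x ^ (n - 1) * y

lemma rho_succ (x y : ℝ) (n : ℕ) :
    rho x y (n + 1) = (x + y) * rho x y n + n * x ^ (n - 1) * y ^ 2 := by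
  unfold rho
  cases n with
  | zero => norm_num
  | succ m =>
    simp only [Nat.add_sub_cancel]
    push_cast
    ring

lemma Rn_norm (X Y : A) (n : ℕ) :
    ‖(X + Y) ^ n - X ^ n - Dn X Y n‖ ≤ rho ‖X‖ ‖Y‖ n := by
  induction n with
  | zero => simp [Dn, rho]
  | succ n ih =>
    rw [Rn_succ, rho_succ]
    calc ‖X * ((X + Y) ^ n - X ^ n - Dn X Y n) + Y * Dn X Y n
          + Y * ((X + Y) ^ n - X ^ n - Dn X Y n)‖
        ≤ ‖X * ((X + Y) ^ n - X ^ n - Dn X Y n)‖ + ‖Y * Dn X Y n‖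
          + ‖Y * ((X + Y) ^ n - X ^ n - Dn X Y n)‖ := norm_add₃_le
      _ ≤ ‖X‖ * rho ‖X‖ ‖Y‖ n + ‖Y‖ * (n * ‖X‖ ^ (n - 1) * ‖Y‖)
          + ‖Y‖ * rho ‖X‖ ‖Y‖ n := by
          gcongr
          · exact (norm_mul_le _ _).trans (mul_le_mul_of_nonneg_left ih (norm_nonneg _))
          · exact (norm_mul_le _ _).trans
              (mul_le_mul_of_nonneg_left (Dn_norm X Y n) (norm_nonneg _))
          · exact (norm_mul_le _ _).trans (mul_le_mul_of_nonneg_left ih (norm_nonneg _))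
      _ = (‖X‖ + ‖Y‖) * rho ‖X‖ ‖Y‖ n + n * ‖X‖ ^ (n - 1) * ‖Y‖ ^ 2 := by ring

-- scalar exp series helpers
lemma summable_exp_aux (t : ℝ) : Summable fun n : ℕ => (n ! : ℝ)⁻¹ * t ^ n := by
  have := Real.summable_pow_div_factorial t
  simpa [div_eq_mul_inv, mul_comm] using this

lemma real_exp_tsum (t : ℝ) : ∑' n : ℕ, (n ! : ℝ)⁻¹ * t ^ n = Real.exp t := by
  rw [Real.exp_eq_exp_ℝ, NormedSpace.exp_eq_tsum ℝ]
  simp [smul_eq_mul]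

lemma summable_aux (c : ℝ) : Summable fun n : ℕ => (n ! : ℝ)⁻¹ * (n * c ^ (n - 1)) := by
  rw [← summable_nat_add_iff 1]
  have h : (fun n : ℕ => ((n + 1)! : ℝ)⁻¹ * ((n + 1 : ℕ) * c ^ (n + 1 - 1)))
      = fun n : ℕ => c ^ n / n ! := by
    funext n
    have h1 : ((n + 1)! : ℝ) = (n + 1) * n ! := by
      push_cast [Nat.factorial_succ]; ring
    have h2 : (n ! : ℝ) ≠ 0 := by positivity
    push_cast [h1]
    field_simp
  rw [show (fun n : ℕ => ((n + 1)! : ℝ)⁻¹ * (↑(n + 1) * c ^ (n + 1 - 1))) = _ from h]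
  exact Real.summable_pow_div_factorial c

lemma tsum_aux (c : ℝ) : ∑' n : ℕ, (n ! : ℝ)⁻¹ * (n * c ^ (n - 1)) = Real.exp c := by
  rw [Summable.tsum_eq_zero_add (summable_aux c)]
  have h : (fun n : ℕ => ((n + 1)! : ℝ)⁻¹ * ((n + 1 : ℕ) * c ^ (n + 1 - 1)))
      = fun n : ℕ => c ^ n / n ! := by
    funext n
    have h1 : ((n + 1)! : ℝ) = (n + 1) * n ! := by
      push_cast [Nat.factorial_succ]; ring
    have h2 : (n ! : ℝ) ≠ 0 := by positivity
    push_cast [h1]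
    field_simp
  simp only [h]
  rw [Real.exp_eq_exp_ℝ, NormedSpace.exp_eq_tsum_div]
  simp

lemma summable_rho (x y : ℝ) : Summable fun n : ℕ => (n ! : ℝ)⁻¹ * rho x y n := by
  have h : (fun n : ℕ => (n ! : ℝ)⁻¹ * rho x y n)
      = fun n : ℕ => ((n ! : ℝ)⁻¹ * (x + y) ^ n - (n ! : ℝ)⁻¹ * x ^ n)
        - ((n ! : ℝ)⁻¹ * (n * x ^ (n - 1))) * y := by
    funext n; unfold rho; ring
  rw [h]
  exact (((summable_exp_aux (x + y)).sub (summable_exp_aux x)).sub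
    ((summable_aux x).mul_right y))

lemma tsum_rho (x y : ℝ) :
    ∑' n : ℕ, (n ! : ℝ)⁻¹ * rho x y n = Real.exp (x + y) - Real.exp x - Real.exp x * y := by
  have h : (fun n : ℕ => (n ! : ℝ)⁻¹ * rho x y n)
      = fun n : ℕ => ((n ! : ℝ)⁻¹ * (x + y) ^ n - (n ! : ℝ)⁻¹ * x ^ n)
        - ((n ! : ℝ)⁻¹ * (n * x ^ (n - 1))) * y := by
    funext n; unfold rho; ring
  rw [h, Summable.tsum_sub ((summable_exp_aux (x + y)).sub (summable_exp_aux x))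
    ((summable_aux x).mul_right y),
    Summable.tsum_sub (summable_exp_aux (x + y)) (summable_exp_aux x), tsum_mul_right,
    real_exp_tsum, real_exp_tsum, tsum_aux]

lemma rho_nonneg (x y : ℝ) (hx : 0 ≤ x) (hy : 0 ≤ y) (n : ℕ) : 0 ≤ rho x y n := by
  induction n with
  | zero => simp [rho]
  | succ n ih =>
    rw [rho_succ]
    positivity

lemma summable_Dn (X Y : A) : Summable fun n : ℕ => (n ! : ℝ)⁻¹ • Dn X Y n := by
  apply Summable.of_norm_bounded
    (g := fun n : ℕ => ((n ! : ℝ)⁻¹ * (n * ‖X‖ ^ (n - 1))) * ‖Y‖)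
    ((summable_aux ‖X‖).mul_right ‖Y‖)
  intro n
  rw [norm_smul, norm_inv, Real.norm_natCast]
  calc (n ! : ℝ)⁻¹ * ‖Dn X Y n‖ ≤ (n ! : ℝ)⁻¹ * (n * ‖X‖ ^ (n - 1) * ‖Y‖) := by
        exact mul_le_mul_of_nonneg_left (Dn_norm X Y n) (by positivity)
    _ = (n ! : ℝ)⁻¹ * (n * ‖X‖ ^ (n - 1)) * ‖Y‖ := by ring

lemma remainder_bound (X Y : A) :
    ‖NormedSpace.exp (X + Y) - NormedSpace.exp X - ∑' n : ℕ, (n ! : ℝ)⁻¹ • Dn X Y n‖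
      ≤ Real.exp ‖X‖ * (Real.exp ‖Y‖ - 1 - ‖Y‖) := by
  have h1 := NormedSpace.expSeries_summable' (𝕂 := ℝ) (X + Y)
  have h2 := NormedSpace.expSeries_summable' (𝕂 := ℝ) X
  have h3 := summable_Dn X Y
  rw [NormedSpace.exp_eq_tsum ℝ, ← Summable.tsum_sub h1 h2, ← Summable.tsum_sub (h1.sub h2) h3]
  have hterm : ∀ n : ℕ, ‖(n ! : ℝ)⁻¹ • (X + Y) ^ n - (n ! : ℝ)⁻¹ • X ^ n
      - (n ! : ℝ)⁻¹ • Dn X Y n‖ ≤ (n ! : ℝ)⁻¹ * rho ‖X‖ ‖Y‖ n := by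
    intro n
    rw [← smul_sub, ← smul_sub, norm_smul, norm_inv, Real.norm_natCast]
    exact mul_le_mul_of_nonneg_left (Rn_norm X Y n) (by positivity)
  calc ‖∑' n : ℕ, ((n ! : ℝ)⁻¹ • (X + Y) ^ n - (n ! : ℝ)⁻¹ • X ^ n
        - (n ! : ℝ)⁻¹ • Dn X Y n)‖
      ≤ ∑' n : ℕ, (n ! : ℝ)⁻¹ * rho ‖X‖ ‖Y‖ n :=
        tsum_of_norm_bounded (summable_rho ‖X‖ ‖Y‖).hasSum hterm
    _ = Real.exp (‖X‖ + ‖Y‖) - Real.exp ‖X‖ - Real.exp ‖X‖ * ‖Y‖ := tsum_rho _ _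
    _ = Real.exp ‖X‖ * (Real.exp ‖Y‖ - 1 - ‖Y‖) := by rw [Real.exp_add]; ring

lemma exp_quad {y : ℝ} (h0 : 0 ≤ y) (h1 : y ≤ 1) : Real.exp y - 1 - y ≤ y ^ 2 := by
  have hb := Real.exp_bound (x := y) (by rwa [abs_of_nonneg h0]) (n := 2) (by norm_num)
  have hs : ∑ i ∈ Finset.range 2, y ^ i / (i ! : ℝ) = 1 + y := by
    simp [Finset.sum_range_succ]
  rw [hs, abs_of_nonneg h0] at hb
  have h2 : Real.exp y - 1 - y ≤ |Real.exp y - (1 + y)| := by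
    rw [show Real.exp y - 1 - y = Real.exp y - (1 + y) by ring]
    exact le_abs_self _
  have h3 : y ^ 2 * (2 + 1) / (2 * 2) ≤ y ^ 2 := by nlinarith [sq_nonneg y]
  calc Real.exp y - 1 - y ≤ |Real.exp y - (1 + y)| := h2
    _ ≤ y ^ 2 * ((2 : ℕ).succ / ((2 : ℕ)! * 2)) := hb
    _ ≤ y ^ 2 := by norm_num [Nat.factorial]; nlinarith [sq_nonneg y]

lemma hasFDerivAt_exp_general (X : A) (L : A →L[ℝ] A)
    (hL : ∀ Y, L Y = ∑' n : ℕ, (n ! : ℝ)⁻¹ • Dn X Y n) :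
    HasFDerivAt (NormedSpace.exp) L X := by
  rw [hasFDerivAt_iff_isLittleO_nhds_zero, Asymptotics.isLittleO_iff]
  intro c hc
  set E := Real.exp ‖X‖ with hE
  have hEpos : 0 < E := Real.exp_pos _
  have hball : ∀ᶠ Y : A in nhds 0, ‖Y‖ < min 1 (c / (E + 1)) := by
    have : (0 : ℝ) < min 1 (c / (E + 1)) := by
      apply lt_min one_pos
      positivity
    filter_upwards [Metric.ball_mem_nhds (0 : A) this] with Y hY
    simpa [dist_zero_right] using hY
  filter_upwards [hball] with Y hY
  have hY1 : ‖Y‖ ≤ 1 := le_of_lt (lt_of_lt_of_le hY (min_le_left _ _))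
  have hY2 : ‖Y‖ ≤ c / (E + 1) := le_of_lt (lt_of_lt_of_le hY (min_le_right _ _))
  rw [hL]
  calc ‖NormedSpace.exp (X + Y) - NormedSpace.exp X - ∑' n : ℕ, (n ! : ℝ)⁻¹ • Dn X Y n‖
      ≤ E * (Real.exp ‖Y‖ - 1 - ‖Y‖) := remainder_bound X Y
    _ ≤ E * ‖Y‖ ^ 2 := by
        exact mul_le_mul_of_nonneg_left (exp_quad (norm_nonneg _) hY1) (le_of_lt hEpos)
    _ = (E * ‖Y‖) * ‖Y‖ := by ring
    _ ≤ c * ‖Y‖ := by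
        apply mul_le_mul_of_nonneg_right _ (norm_nonneg _)
        calc E * ‖Y‖ ≤ E * (c / (E + 1)) := mul_le_mul_of_nonneg_left hY2 (le_of_lt hEpos)
          _ ≤ c := by
            rw [div_eq_mul_inv]
            rw [show E * (c * (E + 1)⁻¹) = c * (E * (E + 1)⁻¹) by ring]
            nth_rewrite 2 [show c = c * 1 by ring]
            apply mul_le_mul_of_nonneg_left _ (le_of_lt hc)
            rw [inv_eq_one_div, mul_div_assoc' E 1 (E+1), mul_one, div_le_one (by positivity)]
            linarith

attribute [local instance] Matrix.linftyOpNormedRing Matrix.linftyOpNormedAlgebra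

open Matrix

section MatrixPart

variable {N : ℕ}

noncomputable def entryCLM (i j : Fin N) :
    Matrix (Fin N) (Fin N) ℝ →L[ℝ] ℝ :=
  LinearMap.toContinuousLinearMap
    { toFun := fun M => M i j
      map_add' := fun _ _ => rfl
      map_smul' := fun _ _ => rfl }

@[simp] lemma entryCLM_apply (i j : Fin N) (M : Matrix (Fin N) (Fin N) ℝ) :
    entryCLM i j M = M i j := rfl

lemma Dn_diag_apply (d : Fin N → ℝ) (Y : Matrix (Fin N) (Fin N) ℝ) (n : ℕ) (i j : Fin N) :
    Dn (Matrix.diagonal d) Y n i j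
      = (∑ k ∈ Finset.range n, d i ^ k * d j ^ (n - 1 - k)) * Y i j := by
  unfold Dn
  rw [Matrix.sum_apply, Finset.sum_mul]
  apply Finset.sum_congr rfl
  intro k hk
  rw [Matrix.diagonal_pow, Matrix.diagonal_pow, Matrix.mul_diagonal, Matrix.diagonal_mul,
    Pi.pow_apply, Pi.pow_apply]
  ring

lemma scalar_key (a b : ℝ) :
    ∑' n : ℕ, (n ! : ℝ)⁻¹ * ∑ k ∈ Finset.range n, a ^ k * b ^ (n - 1 - k)
      = if a = b then Real.exp a else (Real.exp a - Real.exp b) / (a - b) := by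
  by_cases hab : a = b
  · subst hab
    simp only [if_pos rfl]
    have h : ∀ n : ℕ, ∑ k ∈ Finset.range n, a ^ k * a ^ (n - 1 - k) = n * a ^ (n - 1) := by
      intro n
      rw [Finset.sum_congr rfl (fun k hk => ?_), Finset.sum_const, Finset.card_range,
        nsmul_eq_mul]
      rw [← pow_add]
      congr 1
      have := Finset.mem_range.mp hk
      omega
    simp only [h]
    exact tsum_aux a
  · simp only [if_neg hab]
    have hab' : a - b ≠ 0 := sub_ne_zero.mpr hab
    have h : ∀ n : ℕ, (n ! : ℝ)⁻¹ * ∑ k ∈ Finset.range n, a ^ k * b ^ (n - 1 - k)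
        = (a ^ n / (n ! : ℝ) - b ^ n / (n ! : ℝ)) * (a - b)⁻¹ := by
      intro n
      have := geom_sum₂_mul a b n
      have hg : ∑ k ∈ Finset.range n, a ^ k * b ^ (n - 1 - k) = (a ^ n - b ^ n) / (a - b) := by
        rw [eq_div_iff hab']; exact this
      rw [hg]
      field_simp
    simp only [h]
    rw [tsum_mul_right]
    have : ∑' n : ℕ, (a ^ n / (n ! : ℝ) - b ^ n / (n ! : ℝ)) = Real.exp a - Real.exp b := by
      rw [Summable.tsum_sub (Real.summable_pow_div_factorial a) (Real.summable_pow_div_factorial b)]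
      simp [Real.exp_eq_exp_ℝ, NormedSpace.exp_eq_tsum_div]
    rw [this, div_eq_mul_inv]

lemma S_entry [Nonempty (Fin N)] (d : Fin N → ℝ) (B : Matrix (Fin N) (Fin N) ℝ)
    (hB : ∀ i j, B i j =
      if d i = d j then Real.exp (d i)
      else (Real.exp (d i) - Real.exp (d j)) / (d i - d j))
    (Y : Matrix (Fin N) (Fin N) ℝ) (i j : Fin N) :
    (∑' n : ℕ, (n ! : ℝ)⁻¹ • Dn (Matrix.diagonal d) Y n) i j = B i j * Y i j := by
  have hsum := summable_Dn (Matrix.diagonal d) Y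
  have h1 : (∑' n : ℕ, (n ! : ℝ)⁻¹ • Dn (Matrix.diagonal d) Y n) i j
      = ∑' n : ℕ, (n ! : ℝ)⁻¹ * (Dn (Matrix.diagonal d) Y n i j) := by
    calc (∑' n : ℕ, (n ! : ℝ)⁻¹ • Dn (Matrix.diagonal d) Y n) i j
        = entryCLM i j (∑' n : ℕ, (n ! : ℝ)⁻¹ • Dn (Matrix.diagonal d) Y n) := rfl
      _ = ∑' n : ℕ, entryCLM i j ((n ! : ℝ)⁻¹ • Dn (Matrix.diagonal d) Y n) :=
          (entryCLM i j).map_tsum hsum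
      _ = ∑' n : ℕ, (n ! : ℝ)⁻¹ * (Dn (Matrix.diagonal d) Y n i j) := by
          congr 1
  rw [h1]
  simp only [Dn_diag_apply]
  have h2 : ∀ n : ℕ, (n ! : ℝ)⁻¹ * ((∑ k ∈ Finset.range n, d i ^ k * d j ^ (n - 1 - k)) * Y i j)
      = ((n ! : ℝ)⁻¹ * ∑ k ∈ Finset.range n, d i ^ k * d j ^ (n - 1 - k)) * Y i j := by
    intro n; ring
  simp only [h2]
  rw [tsum_mul_right, scalar_key, hB]

noncomputable def hadCLM (B : Matrix (Fin N) (Fin N) ℝ) :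
    Matrix (Fin N) (Fin N) ℝ →L[ℝ] Matrix (Fin N) (Fin N) ℝ :=
  LinearMap.toContinuousLinearMap
    { toFun := fun Δ => B ⊙ Δ
      map_add' := by
        intro x y; ext i j; simp [Matrix.hadamard_apply, mul_add]
      map_smul' := by
        intro c x; ext i j
        simp [Matrix.hadamard_apply, Matrix.smul_apply, smul_eq_mul]
        ring }

@[simp] lemma hadCLM_apply (B Δ : Matrix (Fin N) (Fin N) ℝ) : hadCLM B Δ = B ⊙ Δ := rfl

end MatrixPart


end FrechetAux


/-- the Fréchet derivative of the matrix exponential at a diagonal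
matrix `Λ = diagonal d` applied to a direction `Δ` equals `B ∘ Δ` (Hadamard product),
with `B i j = e^{d i}` if `d i = d j` and `(e^{d i} − e^{d j})/(d i − d j)` otherwise. -/
theorem frechet_derivative_exp_diagonal
    (N : ℕ) (d : Fin N → ℝ)
    (B : Matrix (Fin N) (Fin N) ℝ)
    (hB : ∀ i j, B i j =
      if d i = d j then Real.exp (d i)
      else (Real.exp (d i) - Real.exp (d j)) / (d i - d j)) :
    DifferentiableAt ℝ (NormedSpace.exp :
        Matrix (Fin N) (Fin N) ℝ → Matrix (Fin N) (Fin N) ℝ) (Matrix.diagonal d) ∧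
    ∀ Δ : Matrix (Fin N) (Fin N) ℝ,
      fderiv ℝ (NormedSpace.exp :
        Matrix (Fin N) (Fin N) ℝ → Matrix (Fin N) (Fin N) ℝ) (Matrix.diagonal d) Δ =
      B ⊙ Δ := by
  rcases Nat.eq_zero_or_pos N with hN | hN
  · subst hN
    haveI : Subsingleton (Matrix (Fin 0) (Fin 0) ℝ) :=
      ⟨fun a b => by ext i j; exact i.elim0⟩
    constructor
    · have hconst : (NormedSpace.exp :
          Matrix (Fin 0) (Fin 0) ℝ → Matrix (Fin 0) (Fin 0) ℝ) = fun _ => 0 :=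
        funext fun x => Subsingleton.elim _ _
      rw [hconst]
      exact differentiableAt_const _
    · intro Δ
      exact Subsingleton.elim _ _
  · haveI : Nonempty (Fin N) := ⟨⟨0, hN⟩⟩
    have key : HasFDerivAt (NormedSpace.exp) (FrechetAux.hadCLM B) (Matrix.diagonal d) := by
      apply FrechetAux.hasFDerivAt_exp_general
      intro Y
      ext i j
      change (B ⊙ Y) i j = _; rw [Matrix.hadamard_apply]
      exact (FrechetAux.S_entry d B hB Y i j).symm
    exact ⟨key.differentiableAt, fun Δ => by rw [key.fderiv]; rfl⟩
end
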